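/- Let K, c, C > 0 and suppose G : ℝ_+^{n+2} → [0,∞) satisfies, for all (x,t) ∈ ℝ^{n+1}: G(x,t)² ≤ ∑_{j=0}^∞ e^{-c4^j} sup_{λ>0} ∫_{λ/2}^λ (1/|2^{j+1}Q_λ(x) × 4^{j+2}I_λ(t)|) ∬_{2^{j+1}Q_λ(x)×4^{j+2}I_λ(t)} |H(σ,z,τ)|² dz dτ dσ/σ, where Q_λ(x) = B(x,λ), I_λ(t) = (t-λ²,t+λ²), and H : ℝ_+^{n+2} → ℝ is measurable with ∭_{ℝ_+^{n+2}} |H(σ,z,τ)|² dz dτ dσ/σ ≤ K. Then ∬_{ℝ^{n+1}} G(x,t)² dx dt ≤ C' K with C' depending only on n and c. -/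

import Mathlib

open MeasureTheory Set ENNReal

/-- The dilated region `2^{j+1}Q_λ(x) × 4^{j+2}I_λ(t)`. -/
def dilReg {n : ℕ} (j : ℕ) (lam : ℝ) (p : (Fin n → ℝ) × ℝ) :
    Set ((Fin n → ℝ) × ℝ) :=
  Metric.ball p.1 (2 ^ (j + 1) * lam) ×ˢ
    Ioo (p.2 - 4 ^ (j + 2) * lam ^ 2) (p.2 + 4 ^ (j + 2) * lam ^ 2)

namespace Stmt17Aux

noncomputable def rho (j : ℕ) (k : ℤ) : ℝ := 2 ^ (j + 1) * 2 ^ (k + 1)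
noncomputable def tau (j : ℕ) (k : ℤ) : ℝ := 4 ^ (j + 2) * 4 ^ (k + 1)

lemma rho_pos (j : ℕ) (k : ℤ) : 0 < rho j k := by
  unfold rho; positivity

lemma tau_pos (j : ℕ) (k : ℤ) : 0 < tau j k := by
  unfold tau; positivity

def cell (n j : ℕ) (k : ℤ) (w : (Fin n → ℤ) × ℤ) : Set ((Fin n → ℝ) × ℝ) :=
  (univ.pi fun i => Ico (rho j k * w.1 i) (rho j k * w.1 i + rho j k)) ×ˢ
    Ico (tau j k * w.2) (tau j k * w.2 + tau j k)

def bigReg (n j : ℕ) (k : ℤ) (w : (Fin n → ℤ) × ℤ) : Set ((Fin n → ℝ) × ℝ) :=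
  Metric.ball (fun i => rho j k * w.1 i) (2 * rho j k) ×ˢ
    Ioo (tau j k * w.2 - tau j k) (tau j k * w.2 + 2 * tau j k)

noncomputable def zidx (n j : ℕ) (k : ℤ) (p : (Fin n → ℝ) × ℝ) : (Fin n → ℤ) × ℤ :=
  (fun i => ⌊p.1 i / rho j k⌋, ⌊p.2 / tau j k⌋)

lemma measurableSet_cell (n j : ℕ) (k : ℤ) (w : (Fin n → ℤ) × ℤ) :
    MeasurableSet (cell n j k w) :=
  (MeasurableSet.univ_pi fun _ => measurableSet_Ico).prod measurableSet_Ico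

lemma measurableSet_bigReg (n j : ℕ) (k : ℤ) (w : (Fin n → ℤ) × ℤ) :
    MeasurableSet (bigReg n j k w) :=
  (Metric.isOpen_ball.measurableSet).prod measurableSet_Ioo

lemma volume_cell (n j : ℕ) (k : ℤ) (w : (Fin n → ℤ) × ℤ) :
    volume (cell n j k w) = ENNReal.ofReal (rho j k) ^ n * ENNReal.ofReal (tau j k) := by
  rw [cell, Measure.volume_eq_prod, Measure.prod_prod, volume_pi_pi]
  simp [Real.volume_Ico, Finset.prod_const]

lemma volume_ball_pi (n : ℕ) (x : Fin n → ℝ) {r : ℝ} (hr : 0 < r) :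
    volume (Metric.ball x r) = ENNReal.ofReal (2 * r) ^ n := by
  rw [ball_pi x hr, volume_pi_pi]
  have : ∀ i : Fin n, volume (Metric.ball (x i) r) = ENNReal.ofReal (2 * r) := by
    intro i
    rw [Real.ball_eq_Ioo, Real.volume_Ioo]
    ring_nf
  simp [this, Finset.prod_const]

lemma volume_dilReg (n j : ℕ) (lam : ℝ) (hlam : 0 < lam) (p : (Fin n → ℝ) × ℝ) :
    volume (dilReg j lam p) =
      ENNReal.ofReal (2 * (2 ^ (j + 1) * lam)) ^ n * ENNReal.ofReal (2 * (4 ^ (j + 2) * lam ^ 2)) := by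
  rw [dilReg, Measure.volume_eq_prod, Measure.prod_prod,
    volume_ball_pi n p.1 (by positivity), Real.volume_Ioo]
  ring_nf


lemma floor_div_eq_iff {r x : ℝ} (hr : 0 < r) (z : ℤ) :
    ⌊x / r⌋ = z ↔ r * z ≤ x ∧ x < r * z + r := by
  rw [Int.floor_eq_iff, le_div_iff₀ hr, div_lt_iff₀ hr]
  constructor <;> rintro ⟨h1, h2⟩ <;> constructor <;> push_cast at * <;> nlinarith

lemma mem_cell_iff {n j : ℕ} {k : ℤ} {w : (Fin n → ℤ) × ℤ} {p : (Fin n → ℝ) × ℝ} :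
    p ∈ cell n j k w ↔ zidx n j k p = w := by
  have hr := rho_pos j k
  have ht := tau_pos j k
  simp only [cell, mem_prod, mem_pi, mem_univ, true_implies, mem_Ico,
    zidx, Prod.ext_iff, funext_iff]
  constructor
  · rintro ⟨h1, h2⟩
    exact ⟨fun i => (floor_div_eq_iff hr _).mpr ⟨(h1 i).1, (h1 i).2⟩,
      (floor_div_eq_iff ht _).mpr h2⟩
  · rintro ⟨h1, h2⟩
    exact ⟨fun i => (floor_div_eq_iff hr _).mp (h1 i), (floor_div_eq_iff ht _).mp h2⟩

lemma mem_cell_zidx {n j : ℕ} {k : ℤ} (p : (Fin n → ℝ) × ℝ) :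
    p ∈ cell n j k (zidx n j k p) := mem_cell_iff.mpr rfl

lemma cell_disjoint {n j : ℕ} {k : ℤ} {w w' : (Fin n → ℤ) × ℤ} (h : w ≠ w') :
    Disjoint (cell n j k w) (cell n j k w') := by
  rw [Set.disjoint_left]
  intro p hp hp'
  exact h ((mem_cell_iff.mp hp).symm.trans (mem_cell_iff.mp hp'))

lemma dilReg_subset {n j : ℕ} {k : ℤ} {lam : ℝ} (hlam : 0 < lam)
    (hk1 : (2:ℝ) ^ k ≤ lam) (hk2 : lam < 2 ^ (k + 1)) (p : (Fin n → ℝ) × ℝ) :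
    dilReg j lam p ⊆ bigReg n j k (zidx n j k p) := by
  have hr := rho_pos j k
  have ht := tau_pos j k
  rintro q ⟨hq1, hq2⟩
  have hball : (2:ℝ) ^ (j + 1) * lam < rho j k := by
    rw [rho]
    exact mul_lt_mul_of_pos_left hk2 (by positivity)
  have hsq : lam ^ 2 < (4:ℝ) ^ (k + 1) := by
    have h4 : (4:ℝ) ^ (k + 1) = 2 ^ (k + 1) * 2 ^ (k + 1) := by
      rw [← mul_zpow]; norm_num
    nlinarith
  have htime : (4:ℝ) ^ (j + 2) * lam ^ 2 < tau j k := by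
    rw [tau]
    exact mul_lt_mul_of_pos_left hsq (by positivity)
  constructor
  · -- space part
    simp only [Metric.mem_ball] at hq1 ⊢
    rw [dist_pi_lt_iff (by positivity)]
    intro i
    have h1 : dist (q.1 i) (p.1 i) < rho j k :=
      lt_trans (lt_of_le_of_lt (dist_le_pi_dist q.1 p.1 i) hq1) hball
    have hfl := (floor_div_eq_iff hr (⌊p.1 i / rho j k⌋)).mp rfl
    rw [Real.dist_eq] at h1 ⊢
    have h1' := abs_lt.mp h1
    rw [abs_lt]
    simp only [zidx]
    constructor <;> nlinarith [hfl.1, hfl.2, h1'.1, h1'.2]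
  · -- time part
    simp only [mem_Ioo] at hq2 ⊢
    have hfl := (floor_div_eq_iff ht (⌊p.2 / tau j k⌋)).mp rfl
    simp only [zidx]
    constructor <;> nlinarith [hq2.1, hq2.2, hfl.1, hfl.2]

lemma cell_subset_D {n j : ℕ} {k : ℤ} {w : (Fin n → ℤ) × ℤ} {q : (Fin n → ℝ) × ℝ}
    (hq : q ∈ bigReg n j k w) :
    cell n j k w ⊆
      Metric.ball q.1 (3 * rho j k) ×ˢ Ioo (q.2 - 2 * tau j k) (q.2 + 2 * tau j k) := by
  have hr := rho_pos j k
  have ht := tau_pos j k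
  obtain ⟨hq1, hq2⟩ := hq
  simp only [Metric.mem_ball] at hq1
  simp only [mem_Ioo] at hq2
  rintro p ⟨hp1, hp2⟩
  simp only [mem_pi, mem_univ, true_implies, mem_Ico] at hp1
  simp only [mem_Ico] at hp2
  constructor
  · simp only [Metric.mem_ball]
    rw [dist_pi_lt_iff (by positivity)]
    intro i
    have h1 : dist (q.1 i) (rho j k * w.1 i) < 2 * rho j k := by
      have hd := dist_le_pi_dist q.1 (fun i => rho j k * (w.1 i : ℝ)) i
      exact lt_of_le_of_lt hd hq1
    rw [Real.dist_eq] at h1 ⊢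
    have h1' := abs_lt.mp h1
    have hpi := hp1 i
    rw [abs_lt]
    constructor <;> nlinarith [hpi.1, hpi.2, h1'.1, h1'.2]
  · simp only [mem_Ioo]
    constructor <;> nlinarith [hq2.1, hq2.2, hp2.1, hp2.2]


lemma tsum_lintegral_le {β : Type*} [MeasurableSpace β] (μ : Measure β) {ι : Type*} [Countable ι]
    (f : ι → β → ℝ≥0∞) : ∑' i, ∫⁻ x, f i x ∂μ ≤ ∫⁻ x, ∑' i, f i x ∂μ := by
  rw [ENNReal.tsum_eq_iSup_sum]
  refine iSup_le fun s => ?_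
  classical
  have h : ∑ i ∈ s, ∫⁻ x, f i x ∂μ ≤ ∫⁻ x, ∑ i ∈ s, f i x ∂μ := by
    induction s using Finset.induction with
    | empty => simp
    | @insert a s ha ih =>
      rw [Finset.sum_insert ha]
      refine le_trans (add_le_add le_rfl ih) ?_
      refine le_trans (le_lintegral_add _ _) (le_of_eq (lintegral_congr fun x => ?_))
      rw [Finset.sum_insert ha]
  exact h.trans (lintegral_mono fun x => ENNReal.sum_le_tsum s)

lemma lintegral_const_mul_le' {β : Type*} [MeasurableSpace β] (μ : Measure β)
    {r : ℝ≥0∞} (hr : r ≠ ∞) (f : β → ℝ≥0∞) :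
    ∫⁻ x, r * f x ∂μ ≤ r * ∫⁻ x, f x ∂μ := by
  rcases eq_or_ne r 0 with h0 | h0
  · simp [h0]
  · have h := lintegral_const_mul_le (μ := μ) r⁻¹ fun x => r * f x
    simp only [← mul_assoc, ENNReal.inv_mul_cancel h0 hr, one_mul] at h
    calc ∫⁻ x, r * f x ∂μ = r * (r⁻¹ * ∫⁻ x, r * f x ∂μ) := by
          rw [← mul_assoc, ENNReal.mul_inv_cancel h0 hr, one_mul]
      _ ≤ r * ∫⁻ x, f x ∂μ := mul_le_mul_right h r



lemma overlap_le (n j : ℕ) (k : ℤ) (f : (Fin n → ℝ) × ℝ → ℝ≥0∞) :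
    ∑' w : (Fin n → ℤ) × ℤ, ∫⁻ q in bigReg n j k w, f q ≤
      (6 : ℝ≥0∞) ^ n * 4 * ∫⁻ q, f q := by
  have hr := rho_pos j k
  have ht := tau_pos j k
  set x : ℝ≥0∞ := ENNReal.ofReal (rho j k) ^ n * ENNReal.ofReal (tau j k) with hxdef
  have hx0 : x ≠ 0 :=
    mul_ne_zero (pow_ne_zero _ (ENNReal.ofReal_pos.mpr hr).ne')
      (ENNReal.ofReal_pos.mpr ht).ne'
  have hxt : x ≠ ∞ :=
    ENNReal.mul_ne_top (ENNReal.pow_ne_top ENNReal.ofReal_ne_top) ENNReal.ofReal_ne_top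
  have hN : ((6 : ℝ≥0∞) ^ n * 4) ≠ ∞ :=
    ENNReal.mul_ne_top (ENNReal.pow_ne_top (by simp)) (by simp)
  calc ∑' w : (Fin n → ℤ) × ℤ, ∫⁻ q in bigReg n j k w, f q
      = ∑' w : (Fin n → ℤ) × ℤ, ∫⁻ q, (bigReg n j k w).indicator f q := by
        refine tsum_congr fun w => ?_
        rw [lintegral_indicator (measurableSet_bigReg n j k w)]
    _ ≤ ∫⁻ q, ∑' w : (Fin n → ℤ) × ℤ, (bigReg n j k w).indicator f q :=
        tsum_lintegral_le _ _
    _ ≤ ∫⁻ q, (6 : ℝ≥0∞) ^ n * 4 * f q := by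
        refine lintegral_mono fun q => ?_
        have hterm : ∀ w : (Fin n → ℤ) × ℤ,
            (bigReg n j k w).indicator f q
              = f q * (bigReg n j k w).indicator (fun _ => (1 : ℝ≥0∞)) q := by
          intro w
          by_cases h : q ∈ bigReg n j k w <;> simp [h]
        rw [tsum_congr hterm, ENNReal.tsum_mul_left]
        rw [mul_comm ((6 : ℝ≥0∞) ^ n * 4) (f q)]
        refine mul_le_mul_right ?_ (f q)
        -- bounded overlap of the bigReg sets
        set D : Set ((Fin n → ℝ) × ℝ) :=
          Metric.ball q.1 (3 * rho j k) ×ˢ Ioo (q.2 - 2 * tau j k) (q.2 + 2 * tau j k)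
          with hDdef
        have hDm : MeasurableSet D :=
          (Metric.isOpen_ball.measurableSet).prod measurableSet_Ioo
        have hvolD : volume D
            = ENNReal.ofReal (2 * (3 * rho j k)) ^ n * ENNReal.ofReal (4 * tau j k) := by
          rw [hDdef, Measure.volume_eq_prod, Measure.prod_prod,
            volume_ball_pi n q.1 (by positivity), Real.volume_Ioo]
          have h4 : q.2 + 2 * tau j k - (q.2 - 2 * tau j k) = 4 * tau j k := by ring
          rw [h4]
        have hper : ∀ w : (Fin n → ℤ) × ℤ,
            (bigReg n j k w).indicator (fun _ => (1 : ℝ≥0∞)) q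
              ≤ x⁻¹ * volume (cell n j k w ∩ D) := by
          intro w
          by_cases hqw : q ∈ bigReg n j k w
          · rw [indicator_of_mem hqw, inter_eq_left.mpr (cell_subset_D hqw), volume_cell,
              ← hxdef, ENNReal.inv_mul_cancel hx0 hxt]
          · simp [indicator_of_notMem hqw]
        have hdisj : Pairwise (Function.onFun Disjoint fun w : (Fin n → ℤ) × ℤ =>
            cell n j k w ∩ D) := fun w w' hww' =>
          Disjoint.mono inter_subset_left inter_subset_left (cell_disjoint hww')
        calc ∑' w : (Fin n → ℤ) × ℤ, (bigReg n j k w).indicator (fun _ => (1 : ℝ≥0∞)) q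
            ≤ ∑' w : (Fin n → ℤ) × ℤ, x⁻¹ * volume (cell n j k w ∩ D) :=
              Summable.tsum_le_tsum hper ENNReal.summable ENNReal.summable
          _ = x⁻¹ * ∑' w : (Fin n → ℤ) × ℤ, volume (cell n j k w ∩ D) :=
              ENNReal.tsum_mul_left
          _ ≤ x⁻¹ * volume D := by
              refine mul_le_mul_right ?_ _
              rw [← measure_iUnion hdisj fun w => (measurableSet_cell n j k w).inter hDm]
              exact measure_mono (iUnion_subset fun w => inter_subset_right)
          _ = (6 : ℝ≥0∞) ^ n * 4 := by
              rw [hvolD]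
              have h6 : 2 * (3 * rho j k) = 6 * rho j k := by ring
              have h4 : 4 * tau j k = 4 * tau j k := rfl
              rw [h6, ENNReal.ofReal_mul (by norm_num : (0:ℝ) ≤ 6),
                ENNReal.ofReal_mul (by norm_num : (0:ℝ) ≤ 4), mul_pow]
              have : x⁻¹ * (ENNReal.ofReal 6 ^ n * ENNReal.ofReal (rho j k) ^ n *
                  (ENNReal.ofReal 4 * ENNReal.ofReal (tau j k)))
                  = (ENNReal.ofReal 6 ^ n * ENNReal.ofReal 4) * (x⁻¹ * x) := by
                rw [hxdef]; ring
              rw [this, ENNReal.inv_mul_cancel hx0 hxt, mul_one]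
              norm_num
    _ ≤ (6 : ℝ≥0∞) ^ n * 4 * ∫⁻ q, f q := lintegral_const_mul_le' _ hN f


noncomputable def Tbar (n : ℕ) (H : ℝ → (Fin n → ℝ) × ℝ → ℝ) (j : ℕ) (k : ℤ)
    (w : (Fin n → ℤ) × ℤ) : ℝ≥0∞ :=
  ∫⁻ σ in Ioo ((2:ℝ) ^ (k - 1)) ((2:ℝ) ^ (k + 1)),
    ((ENNReal.ofReal (rho j k) ^ n * ENNReal.ofReal (tau j k / 2))⁻¹ *
      ∫⁻ q in bigReg n j k w, ENNReal.ofReal ((H σ q) ^ 2)) * ENNReal.ofReal σ⁻¹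

lemma lam_term_le (n : ℕ) (H : ℝ → (Fin n → ℝ) × ℝ → ℝ) (j : ℕ) {lam : ℝ}
    (hlam : 0 < lam) {k : ℤ} (hk1 : (2:ℝ) ^ k ≤ lam) (hk2 : lam < 2 ^ (k + 1))
    (p : (Fin n → ℝ) × ℝ) :
    (∫⁻ σ in Ioo (lam / 2) lam,
        ((volume (dilReg j lam p))⁻¹ *
          ∫⁻ q in dilReg j lam p, ENNReal.ofReal ((H σ q) ^ 2)) * ENNReal.ofReal σ⁻¹)
      ≤ Tbar n H j k (zidx n j k p) := by
  have hr := rho_pos j k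
  have ht := tau_pos j k
  have h2k : (0:ℝ) < 2 ^ k := by positivity
  have hsub : Ioo (lam / 2) lam ⊆ Ioo ((2:ℝ) ^ (k - 1)) ((2:ℝ) ^ (k + 1)) := by
    apply Ioo_subset_Ioo
    · have : (2:ℝ) ^ (k - 1) = 2 ^ k / 2 := by
        rw [zpow_sub_one₀ (by norm_num : (2:ℝ) ≠ 0) k]; ring
      rw [this]; linarith
    · exact hk2.le
  refine lintegral_mono' (Measure.restrict_mono hsub le_rfl) fun σ => ?_
  refine mul_le_mul_left (mul_le_mul' ?_ ?_) _
  · -- volume inverse bound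
    refine ENNReal.inv_le_inv' ?_
    rw [volume_dilReg n j lam hlam p]
    have hρ : rho j k ≤ 2 * (2 ^ (j + 1) * lam) := by
      rw [rho, zpow_add_one₀ (by norm_num : (2:ℝ) ≠ 0) k]
      have hp : (0:ℝ) < 2 ^ (j + 1) := by positivity
      nlinarith
    have hτ : tau j k / 2 ≤ 2 * (4 ^ (j + 2) * lam ^ 2) := by
      rw [tau, zpow_add_one₀ (by norm_num : (4:ℝ) ≠ 0) k]
      have h42 : (4:ℝ) ^ k = (2 ^ k) ^ 2 := by
        rw [sq, ← mul_zpow]; norm_num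
      have hsq : (2:ℝ) ^ k * 2 ^ k ≤ lam ^ 2 := by nlinarith
      have hp : (0:ℝ) < 4 ^ (j + 2) := by positivity
      nlinarith [sq_nonneg lam]
    exact mul_le_mul' (pow_le_pow_left' (ENNReal.ofReal_le_ofReal hρ) n)
      (ENNReal.ofReal_le_ofReal hτ)
  · exact lintegral_mono_set (dilReg_subset hlam hk1 hk2 p)


lemma measurable_Theta (n : ℕ) (H : ℝ → (Fin n → ℝ) × ℝ → ℝ) (j : ℕ) (k : ℤ) :
    Measurable fun p => Tbar n H j k (zidx n j k p) := by
  have hrw : (fun p => Tbar n H j k (zidx n j k p))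
      = fun p => ∑' w : (Fin n → ℤ) × ℤ,
          (cell n j k w).indicator (fun _ => Tbar n H j k w) p := by
    funext p
    rw [tsum_eq_single (zidx n j k p) ?_]
    · rw [indicator_of_mem (mem_cell_zidx p)]
    · intro w hw
      exact indicator_of_notMem (fun hmem => hw (mem_cell_iff.mp hmem).symm) _
  rw [hrw]
  exact Measurable.ennreal_tsum fun w =>
    measurable_const.indicator (measurableSet_cell n j k w)

lemma lintegral_Theta_le (n : ℕ) (H : ℝ → (Fin n → ℝ) × ℝ → ℝ) (j : ℕ) (k : ℤ) :
    ∫⁻ p, Tbar n H j k (zidx n j k p) ≤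
      2 * ((6:ℝ≥0∞) ^ n * 4) *
        ∫⁻ σ in Ioo ((2:ℝ) ^ (k - 1)) ((2:ℝ) ^ (k + 1)),
          (∫⁻ q, ENNReal.ofReal ((H σ q) ^ 2)) * ENNReal.ofReal σ⁻¹ := by
  have hr := rho_pos j k
  have ht := tau_pos j k
  set a : ℝ≥0∞ := ENNReal.ofReal (rho j k) ^ n with ha
  set b : ℝ≥0∞ := ENNReal.ofReal (tau j k / 2) with hb
  have hab0 : a * b ≠ 0 :=
    mul_ne_zero (pow_ne_zero _ (ENNReal.ofReal_pos.mpr hr).ne')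
      (ENNReal.ofReal_pos.mpr (by linarith : (0:ℝ) < tau j k / 2)).ne'
  have habt : a * b ≠ ∞ :=
    ENNReal.mul_ne_top (ENNReal.pow_ne_top ENNReal.ofReal_ne_top) ENNReal.ofReal_ne_top
  have hVV : (a * ENNReal.ofReal (tau j k)) * (a * b)⁻¹ = 2 := by
    have hτ2 : ENNReal.ofReal (tau j k) = 2 * b := by
      rw [hb]
      have h1 : tau j k = 2 * (tau j k / 2) := by ring
      rw [h1, ENNReal.ofReal_mul (by norm_num : (0:ℝ) ≤ 2)]
      norm_num
    rw [hτ2]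
    have : a * (2 * b) * (a * b)⁻¹ = 2 * ((a * b) * (a * b)⁻¹) := by ring
    rw [this, ENNReal.mul_inv_cancel hab0 habt, mul_one]
  have hrw : (fun p => Tbar n H j k (zidx n j k p))
      = fun p => ∑' w : (Fin n → ℤ) × ℤ,
          (cell n j k w).indicator (fun _ => Tbar n H j k w) p := by
    funext p
    rw [tsum_eq_single (zidx n j k p) ?_]
    · rw [indicator_of_mem (mem_cell_zidx p)]
    · intro w hw
      exact indicator_of_notMem (fun hmem => hw (mem_cell_iff.mp hmem).symm) _
  rw [hrw, lintegral_tsum fun w =>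
    (measurable_const.indicator (measurableSet_cell n j k w)).aemeasurable]
  have hstep : ∀ w : (Fin n → ℤ) × ℤ,
      (∫⁻ p, (cell n j k w).indicator (fun _ => Tbar n H j k w) p)
        = (a * ENNReal.ofReal (tau j k)) * Tbar n H j k w := by
    intro w
    rw [lintegral_indicator_const (measurableSet_cell n j k w), volume_cell, ← ha,
      mul_comm]
  rw [tsum_congr hstep]
  calc ∑' w : (Fin n → ℤ) × ℤ, (a * ENNReal.ofReal (tau j k)) * Tbar n H j k w
      ≤ ∑' w : (Fin n → ℤ) × ℤ,
          ∫⁻ σ in Ioo ((2:ℝ) ^ (k - 1)) ((2:ℝ) ^ (k + 1)),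
            (a * ENNReal.ofReal (tau j k)) *
              (((a * b)⁻¹ * ∫⁻ q in bigReg n j k w, ENNReal.ofReal ((H σ q) ^ 2)) *
                ENNReal.ofReal σ⁻¹) := by
        refine Summable.tsum_le_tsum (fun w => ?_) ENNReal.summable ENNReal.summable
        exact lintegral_const_mul_le _ _
    _ ≤ ∫⁻ σ in Ioo ((2:ℝ) ^ (k - 1)) ((2:ℝ) ^ (k + 1)),
          ∑' w : (Fin n → ℤ) × ℤ,
            (a * ENNReal.ofReal (tau j k)) *
              (((a * b)⁻¹ * ∫⁻ q in bigReg n j k w, ENNReal.ofReal ((H σ q) ^ 2)) *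
                ENNReal.ofReal σ⁻¹) := tsum_lintegral_le _ _
    _ ≤ ∫⁻ σ in Ioo ((2:ℝ) ^ (k - 1)) ((2:ℝ) ^ (k + 1)),
          2 * ((6:ℝ≥0∞) ^ n * 4) *
            ((∫⁻ q, ENNReal.ofReal ((H σ q) ^ 2)) * ENNReal.ofReal σ⁻¹) := by
        refine lintegral_mono fun σ => ?_
        have hre : ∀ w : (Fin n → ℤ) × ℤ,
            (a * ENNReal.ofReal (tau j k)) *
              (((a * b)⁻¹ * ∫⁻ q in bigReg n j k w, ENNReal.ofReal ((H σ q) ^ 2)) *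
                ENNReal.ofReal σ⁻¹)
            = ((a * ENNReal.ofReal (tau j k)) * (a * b)⁻¹ * ENNReal.ofReal σ⁻¹) *
                ∫⁻ q in bigReg n j k w, ENNReal.ofReal ((H σ q) ^ 2) := by
          intro w; ring
        rw [tsum_congr hre, ENNReal.tsum_mul_left, hVV]
        calc (2 * ENNReal.ofReal σ⁻¹) *
              ∑' w : (Fin n → ℤ) × ℤ,
                ∫⁻ q in bigReg n j k w, ENNReal.ofReal ((H σ q) ^ 2)
            ≤ (2 * ENNReal.ofReal σ⁻¹) *
                ((6:ℝ≥0∞) ^ n * 4 * ∫⁻ q, ENNReal.ofReal ((H σ q) ^ 2)) :=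
              mul_le_mul_right (overlap_le n j k _) _
          _ = 2 * ((6:ℝ≥0∞) ^ n * 4) *
                ((∫⁻ q, ENNReal.ofReal ((H σ q) ^ 2)) * ENNReal.ofReal σ⁻¹) := by ring
    _ ≤ 2 * ((6:ℝ≥0∞) ^ n * 4) *
          ∫⁻ σ in Ioo ((2:ℝ) ^ (k - 1)) ((2:ℝ) ^ (k + 1)),
            (∫⁻ q, ENNReal.ofReal ((H σ q) ^ 2)) * ENNReal.ofReal σ⁻¹ := by
        exact lintegral_const_mul_le' (r := 2 * ((6:ℝ≥0∞) ^ n * 4)) _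
          (ENNReal.mul_ne_top (by simp)
            (ENNReal.mul_ne_top (ENNReal.pow_ne_top (by simp)) (by simp))) _


lemma indicator_dyadic_le (u : ℝ → ℝ≥0∞) (σ : ℝ) :
    ∑' k : ℤ, (Ioo ((2:ℝ) ^ (k - 1)) ((2:ℝ) ^ (k + 1))).indicator u σ ≤ 2 * u σ := by
  have hterm : ∀ k : ℤ,
      (Ioo ((2:ℝ) ^ (k - 1)) ((2:ℝ) ^ (k + 1))).indicator u σ
        = u σ * (Ioo ((2:ℝ) ^ (k - 1)) ((2:ℝ) ^ (k + 1))).indicator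
            (fun _ => (1:ℝ≥0∞)) σ := by
    intro k
    by_cases h : σ ∈ Ioo ((2:ℝ) ^ (k - 1)) ((2:ℝ) ^ (k + 1)) <;> simp [h]
  rw [tsum_congr hterm, ENNReal.tsum_mul_left, mul_comm (2 : ℝ≥0∞) (u σ)]
  refine mul_le_mul_right ?_ (u σ)
  by_cases hσ : 0 < σ
  · set m := Int.log 2 σ with hm
    have hm1 : (2:ℝ) ^ m ≤ σ := by
      have := Int.zpow_log_le_self (b := 2) (by norm_num) hσ
      simpa using this
    have hm2 : σ < (2:ℝ) ^ (m + 1) := by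
      have := Int.lt_zpow_succ_log_self (b := 2) (by norm_num) σ
      simpa using this
    classical
    have hvanish : ∀ k : ℤ, k ∉ ({m, m + 1} : Finset ℤ) →
        (Ioo ((2:ℝ) ^ (k - 1)) ((2:ℝ) ^ (k + 1))).indicator (fun _ => (1:ℝ≥0∞)) σ
          = 0 := by
      intro k hk
      refine indicator_of_notMem (fun hmem => hk ?_) _
      obtain ⟨h1, h2⟩ := hmem
      have hk1 : m ≤ k := by
        have : (2:ℝ) ^ m < 2 ^ (k + 1) := lt_of_le_of_lt hm1 h2
        have := (zpow_lt_zpow_iff_right₀ (by norm_num : (1:ℝ) < 2)).mp this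
        omega
      have hk2 : k ≤ m + 1 := by
        have : (2:ℝ) ^ (k - 1) < 2 ^ (m + 1) := lt_trans h1 hm2
        have := (zpow_lt_zpow_iff_right₀ (by norm_num : (1:ℝ) < 2)).mp this
        omega
      simp only [Finset.mem_insert, Finset.mem_singleton]
      omega
    rw [tsum_eq_sum hvanish]
    calc ∑ k ∈ ({m, m + 1} : Finset ℤ),
          (Ioo ((2:ℝ) ^ (k - 1)) ((2:ℝ) ^ (k + 1))).indicator (fun _ => (1:ℝ≥0∞)) σ
        ≤ ∑ _k ∈ ({m, m + 1} : Finset ℤ), 1 := by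
          refine Finset.sum_le_sum fun k _ => ?_
          exact indicator_le (fun _ _ => le_rfl) σ
      _ ≤ 2 := by
          rw [Finset.sum_const, nsmul_eq_mul, mul_one]
          have := Finset.card_insert_le m ({m + 1} : Finset ℤ)
          simp only [Finset.card_singleton] at this
          exact_mod_cast le_trans (Nat.cast_le.mpr this) (by norm_num)
  · have hzero : ∀ k : ℤ,
        (Ioo ((2:ℝ) ^ (k - 1)) ((2:ℝ) ^ (k + 1))).indicator (fun _ => (1:ℝ≥0∞)) σ
          = 0 := by
      intro k
      refine indicator_of_notMem (fun hmem => hσ ?_) _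
      exact lt_trans (zpow_pos (by norm_num : (0:ℝ) < 2) _) hmem.1
    rw [tsum_congr hzero]
    simp

lemma sum_dyadic_le (u : ℝ → ℝ≥0∞) :
    ∑' k : ℤ, ∫⁻ σ in Ioo ((2:ℝ) ^ (k - 1)) ((2:ℝ) ^ (k + 1)), u σ
      ≤ 2 * ∫⁻ σ in Ioi (0:ℝ), u σ := by
  have hsub : ∀ k : ℤ, Ioo ((2:ℝ) ^ (k - 1)) ((2:ℝ) ^ (k + 1)) ⊆ Ioi (0:ℝ) :=
    fun k σ hσ => lt_trans (zpow_pos (by norm_num : (0:ℝ) < 2) _) hσ.1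
  have hk : ∀ k : ℤ, ∫⁻ σ in Ioo ((2:ℝ) ^ (k - 1)) ((2:ℝ) ^ (k + 1)), u σ
      = ∫⁻ σ in Ioi (0:ℝ),
          (Ioo ((2:ℝ) ^ (k - 1)) ((2:ℝ) ^ (k + 1))).indicator u σ := by
    intro k
    rw [lintegral_indicator measurableSet_Ioo, Measure.restrict_restrict measurableSet_Ioo,
      inter_eq_left.mpr (hsub k)]
  rw [tsum_congr hk]
  calc ∑' k : ℤ, ∫⁻ σ in Ioi (0:ℝ),
        (Ioo ((2:ℝ) ^ (k - 1)) ((2:ℝ) ^ (k + 1))).indicator u σ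
      ≤ ∫⁻ σ in Ioi (0:ℝ), ∑' k : ℤ,
          (Ioo ((2:ℝ) ^ (k - 1)) ((2:ℝ) ^ (k + 1))).indicator u σ :=
        tsum_lintegral_le _ _
    _ ≤ ∫⁻ σ in Ioi (0:ℝ), 2 * u σ :=
        lintegral_mono fun σ => indicator_dyadic_le u σ
    _ ≤ 2 * ∫⁻ σ in Ioi (0:ℝ), u σ :=
        lintegral_const_mul_le' (r := 2) _ (by simp) _

lemma sum_exp_le (c : ℝ) (hc : 0 < c) :
    ∑' j : ℕ, ENNReal.ofReal (Real.exp (-c * 4 ^ j))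
      ≤ (1 - ENNReal.ofReal (Real.exp (-c)))⁻¹ := by
  have hterm : ∀ j : ℕ, ENNReal.ofReal (Real.exp (-c * 4 ^ j))
      ≤ ENNReal.ofReal (Real.exp (-c)) ^ j := by
    intro j
    rw [← ENNReal.ofReal_pow (Real.exp_nonneg _), ← Real.exp_nat_mul]
    refine ENNReal.ofReal_le_ofReal (Real.exp_le_exp.mpr ?_)
    have h1 : (j:ℝ) ≤ 4 ^ j := by
      calc (j:ℝ) ≤ 2 ^ j := by exact_mod_cast (Nat.lt_two_pow_self (n := j)).le
        _ ≤ 4 ^ j := by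
          refine pow_le_pow_left₀ (by norm_num) (by norm_num) j
    nlinarith
  calc ∑' j : ℕ, ENNReal.ofReal (Real.exp (-c * 4 ^ j))
      ≤ ∑' j : ℕ, ENNReal.ofReal (Real.exp (-c)) ^ j :=
        Summable.tsum_le_tsum hterm ENNReal.summable ENNReal.summable
    _ = (1 - ENNReal.ofReal (Real.exp (-c)))⁻¹ := ENNReal.tsum_geometric _

lemma sum_exp_ne_top (c : ℝ) (hc : 0 < c) :
    (1 - ENNReal.ofReal (Real.exp (-c)))⁻¹ ≠ ∞ := by
  rw [Ne, ENNReal.inv_eq_top, tsub_eq_zero_iff_le]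
  intro h
  have hx : ENNReal.ofReal (Real.exp (-c)) < 1 :=
    ENNReal.ofReal_lt_one.mpr (Real.exp_lt_one_iff.mpr (by linarith))
  exact absurd h (not_le.mpr hx)

end Stmt17Aux

/-- the Tonelli-type averaging argument: a pointwise bound of `G²`
by weighted dyadic averages of a square function `H` with
`∭ |H|² dz dτ dσ/σ ≤ K` gives `∬ G² ≤ C'K` with `C' = C'(n,c)`. -/
theorem stmt17 (n : ℕ) (c : ℝ) (hc : 0 < c) :
    ∃ C' : ℝ, 0 < C' ∧
      ∀ (G : (Fin n → ℝ) × ℝ → ℝ)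
        (H : ℝ → (Fin n → ℝ) × ℝ → ℝ) (K : ℝ≥0∞),
      (∀ p : (Fin n → ℝ) × ℝ, ENNReal.ofReal ((G p) ^ 2) ≤
        ∑' j : ℕ, ENNReal.ofReal (Real.exp (-c * 4 ^ j)) *
          ⨆ lam : {l : ℝ // 0 < l},
            ∫⁻ σ in Ioo (lam.1 / 2) lam.1,
              ((volume (dilReg j lam.1 p))⁻¹ *
                ∫⁻ q in dilReg j lam.1 p, ENNReal.ofReal ((H σ q) ^ 2)) *
                ENNReal.ofReal σ⁻¹) →
      ((∫⁻ σ in Ioi (0 : ℝ),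
          (∫⁻ q : (Fin n → ℝ) × ℝ, ENNReal.ofReal ((H σ q) ^ 2)) *
            ENNReal.ofReal σ⁻¹) ≤ K) →
      (∫⁻ p : (Fin n → ℝ) × ℝ, ENNReal.ofReal ((G p) ^ 2)) ≤
        ENNReal.ofReal C' * K := by
  classical
  open Stmt17Aux in
  set E : ℝ≥0∞ := (1 - ENNReal.ofReal (Real.exp (-c)))⁻¹ with hE
  set C2 : ℝ≥0∞ := 2 * ((6:ℝ≥0∞) ^ n * 4) with hC2
  have hC2top : C2 ≠ ∞ :=
    ENNReal.mul_ne_top (by simp)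
      (ENNReal.mul_ne_top (ENNReal.pow_ne_top (by simp)) (by simp))
  set Ctot : ℝ≥0∞ := E * (C2 * 2) with hCtot
  have hCtop : Ctot ≠ ∞ :=
    ENNReal.mul_ne_top (Stmt17Aux.sum_exp_ne_top c hc)
      (ENNReal.mul_ne_top hC2top (by simp))
  refine ⟨Ctot.toReal + 1, by positivity, ?_⟩
  intro G H K hG hK
  have hpt : ∀ p : (Fin n → ℝ) × ℝ, ENNReal.ofReal ((G p) ^ 2) ≤
      ∑' j : ℕ, ENNReal.ofReal (Real.exp (-c * 4 ^ j)) *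
        ∑' k : ℤ, Stmt17Aux.Tbar n H j k (Stmt17Aux.zidx n j k p) := by
    intro p
    refine le_trans (hG p)
      (Summable.tsum_le_tsum (fun j => mul_le_mul_right ?_ _) ENNReal.summable ENNReal.summable)
    refine iSup_le fun lam => ?_
    have hlam : (0:ℝ) < lam.1 := lam.2
    have hk1 : (2:ℝ) ^ Int.log 2 lam.1 ≤ lam.1 := by
      have := Int.zpow_log_le_self (b := 2) (by norm_num) hlam
      simpa using this
    have hk2 : lam.1 < (2:ℝ) ^ (Int.log 2 lam.1 + 1) := by
      have := Int.lt_zpow_succ_log_self (b := 2) (by norm_num) lam.1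
      simpa using this
    exact le_trans (Stmt17Aux.lam_term_le n H j hlam hk1 hk2 p)
      (ENNReal.le_tsum (Int.log 2 lam.1))
  have hme : ∀ j : ℕ, Measurable fun p : (Fin n → ℝ) × ℝ =>
      ∑' k : ℤ, Stmt17Aux.Tbar n H j k (Stmt17Aux.zidx n j k p) :=
    fun j => Measurable.ennreal_tsum fun k => Stmt17Aux.measurable_Theta n H j k
  have hjbound : ∀ j : ℕ,
      (∑' k : ℤ, ∫⁻ p : (Fin n → ℝ) × ℝ,
          Stmt17Aux.Tbar n H j k (Stmt17Aux.zidx n j k p)) ≤ C2 * (2 * K) := by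
    intro j
    calc ∑' k : ℤ, ∫⁻ p : (Fin n → ℝ) × ℝ,
          Stmt17Aux.Tbar n H j k (Stmt17Aux.zidx n j k p)
        ≤ ∑' k : ℤ, C2 * ∫⁻ σ in Ioo ((2:ℝ) ^ (k - 1)) ((2:ℝ) ^ (k + 1)),
            (∫⁻ q : (Fin n → ℝ) × ℝ, ENNReal.ofReal ((H σ q) ^ 2)) *
              ENNReal.ofReal σ⁻¹ := by
          refine Summable.tsum_le_tsum (fun k => ?_) ENNReal.summable ENNReal.summable
          exact Stmt17Aux.lintegral_Theta_le n H j k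
      _ = C2 * ∑' k : ℤ, ∫⁻ σ in Ioo ((2:ℝ) ^ (k - 1)) ((2:ℝ) ^ (k + 1)),
            (∫⁻ q : (Fin n → ℝ) × ℝ, ENNReal.ofReal ((H σ q) ^ 2)) *
              ENNReal.ofReal σ⁻¹ := ENNReal.tsum_mul_left
      _ ≤ C2 * (2 * ∫⁻ σ in Ioi (0:ℝ),
            (∫⁻ q : (Fin n → ℝ) × ℝ, ENNReal.ofReal ((H σ q) ^ 2)) *
              ENNReal.ofReal σ⁻¹) :=
          mul_le_mul_right (Stmt17Aux.sum_dyadic_le _) _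
      _ ≤ C2 * (2 * K) := mul_le_mul_right (mul_le_mul_right hK 2) C2
  calc ∫⁻ p : (Fin n → ℝ) × ℝ, ENNReal.ofReal ((G p) ^ 2)
      ≤ ∫⁻ p : (Fin n → ℝ) × ℝ,
          ∑' j : ℕ, ENNReal.ofReal (Real.exp (-c * 4 ^ j)) *
            ∑' k : ℤ, Stmt17Aux.Tbar n H j k (Stmt17Aux.zidx n j k p) :=
        lintegral_mono hpt
    _ = ∑' j : ℕ, ∫⁻ p : (Fin n → ℝ) × ℝ,
          ENNReal.ofReal (Real.exp (-c * 4 ^ j)) *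
            ∑' k : ℤ, Stmt17Aux.Tbar n H j k (Stmt17Aux.zidx n j k p) :=
        lintegral_tsum fun j => (measurable_const.mul (hme j)).aemeasurable
    _ = ∑' j : ℕ, ENNReal.ofReal (Real.exp (-c * 4 ^ j)) *
          ∫⁻ p : (Fin n → ℝ) × ℝ,
            ∑' k : ℤ, Stmt17Aux.Tbar n H j k (Stmt17Aux.zidx n j k p) :=
        tsum_congr fun j => lintegral_const_mul _ (hme j)
    _ = ∑' j : ℕ, ENNReal.ofReal (Real.exp (-c * 4 ^ j)) *
          ∑' k : ℤ, ∫⁻ p : (Fin n → ℝ) × ℝ,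
            Stmt17Aux.Tbar n H j k (Stmt17Aux.zidx n j k p) := by
        refine tsum_congr fun j => congrArg _ ?_
        exact lintegral_tsum fun k => (Stmt17Aux.measurable_Theta n H j k).aemeasurable
    _ ≤ ∑' j : ℕ, ENNReal.ofReal (Real.exp (-c * 4 ^ j)) * (C2 * (2 * K)) :=
        Summable.tsum_le_tsum (fun j => mul_le_mul_right (hjbound j) _)
          ENNReal.summable ENNReal.summable
    _ = (∑' j : ℕ, ENNReal.ofReal (Real.exp (-c * 4 ^ j))) * (C2 * (2 * K)) :=
        ENNReal.tsum_mul_right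
    _ ≤ E * (C2 * (2 * K)) := mul_le_mul_left (Stmt17Aux.sum_exp_le c hc) _
    _ = Ctot * K := by rw [hCtot]; ring
    _ ≤ ENNReal.ofReal (Ctot.toReal + 1) * K := by
        refine mul_le_mul_left ?_ K
        rw [ENNReal.ofReal_add ENNReal.toReal_nonneg (by norm_num),
          ENNReal.ofReal_toReal hCtop]
        exact le_self_add
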